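/- Let g be a finite-dimensional real Lie algebra and φ a Lie algebra automorphism of g; set A = φ − id, h = ker A, m = A(g), and assume g = h ⊕ m (regularity). Then m is φ-invariant; let θ = φ|_m. Let ⟨·,·⟩ be an inner product on m that is naturally reductive and θ-invariant (⟨θX, θY⟩ = ⟨X,Y⟩ for all X,Y ∈ m). Let f = p(θ) for some real polynomial p, and suppose f is a metric f-structure satisfying f² = θf or f² = −θf. Then, with (∇_X f)(Y) = ½([X, fY]_m − f([X,Y]_m)), one has (∇_{fX} f)(fX) = 0 for all X ∈ m. (A canonical metric f-structure with f² = ±θf on a regular Φ-space with naturally reductive metric is a nearly Kähler f-structure.) -/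

import Mathlib

/-- A canonical metric f-structure satisfying f² = ±θf on a regular Φ-space
with a naturally reductive (and θ-invariant) metric is a nearly Kähler
f-structure: (∇_{fX} f)(fX) = 0 for all X ∈ m. -/
theorem stmt_17 (g : Type*) [LieRing g] [LieAlgebra ℝ g] [FiniteDimensional ℝ g]
    (φ : g ≃ₗ⁅ℝ⁆ g)
    (A : g →ₗ[ℝ] g) (hA : A = (φ.toLieHom : g →ₗ[ℝ] g) - LinearMap.id)
    (h m : Submodule ℝ g) (hh : h = LinearMap.ker A) (hm : m = LinearMap.range A)
    -- regularity: g = h ⊕ m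
    (hc : IsCompl h m)
    -- θ = φ|_m (m is φ-invariant)
    (θ : m →ₗ[ℝ] m) (hθ : ∀ X : m, (θ X : g) = φ X)
    -- the inner product on m, naturally reductive and θ-invariant
    (B : m →ₗ[ℝ] m →ₗ[ℝ] ℝ)
    (hBsymm : ∀ X Y : m, B X Y = B Y X)
    (hBpos : ∀ X : m, X ≠ 0 → 0 < B X X)
    (hBnat : ∀ X Y Z : m,
      B (m.linearProjOfIsCompl h hc.symm ⁅(X : g), (Y : g)⁆) Z =
        B X (m.linearProjOfIsCompl h hc.symm ⁅(Y : g), (Z : g)⁆))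
    (hBθ : ∀ X Y : m, B (θ X) (θ Y) = B X Y)
    -- f is a canonical metric f-structure: a polynomial in θ
    (f : m →ₗ[ℝ] m) (p : Polynomial ℝ) (hfp : f = Polynomial.aeval θ p)
    (hf3 : ∀ X : m, f (f (f X)) + f X = 0)
    (hfskew : ∀ X Y : m, B (f X) Y + B X (f Y) = 0)
    -- f² = θf or f² = −θf
    (hfsq : (∀ X : m, f (f X) = θ (f X)) ∨ (∀ X : m, f (f X) = -θ (f X)))
    -- the covariant derivative
    (nabla : m → m → m)
    (hnabla : ∀ X Y : m, nabla X Y = (1 / 2 : ℝ) •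
      (m.linearProjOfIsCompl h hc.symm ⁅(X : g), (f Y : g)⁆ -
        f (m.linearProjOfIsCompl h hc.symm ⁅(X : g), (Y : g)⁆))) :
    ∀ X : m, nabla (f X) (f X) = 0 := by
  intro X
  set P : g →ₗ[ℝ] m := m.linearProjOfIsCompl h hc.symm with hPdef
  have hAapp : ∀ v : g, A v = φ v - v := by
    intro v; rw [hA]; rfl
  -- elements of h are fixed by φ
  have hφfix : ∀ w : g, w ∈ h → φ w = w := by
    intro w hw
    have hw' : A w = 0 := by rw [hh] at hw; exact hw
    rw [hAapp] at hw'
    rwa [sub_eq_zero] at hw'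
  have hφadd : ∀ a b : g, φ (a + b) = φ a + φ b := fun a b =>
    map_add φ a b
  -- every v decomposes with h-part v - P v
  have hdecmem : ∀ v : g, (v - (P v : g)) ∈ h := by
    intro v
    have : P (v - (P v : g)) = 0 := by
      rw [map_sub]
      exact sub_eq_zero.2 (Submodule.projectionOnto_apply_left hc.symm (P v)).symm
    exact (Submodule.linearProjOfIsCompl_apply_eq_zero_iff hc.symm).1 this
  -- P commutes with φ/θ
  have hPφ : ∀ v : g, P (φ v) = θ (P v) := by
    intro v
    have hdec : φ v = φ (P v : g) + φ (v - (P v : g)) := by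
      rw [← hφadd]
      congr 1
      abel
    rw [hdec, map_add, hφfix _ (hdecmem v),
      (by exact Submodule.projectionOnto_apply_of_mem_right hc.symm (hdecmem v) : P (v - (P v : g)) = 0), add_zero,
      ← hθ (P v)]
    exact Submodule.linearProjOfIsCompl_apply_left hc.symm (θ (P v))
  -- θ commutes with f
  have hθf : ∀ Z : m, θ (f Z) = f (θ Z) := by
    intro Z
    have hcomm : θ * f = f * θ := by
      rw [hfp]
      have h1 : θ = Polynomial.aeval θ (Polynomial.X : Polynomial ℝ) := by simp
      calc θ * Polynomial.aeval θ p
          = Polynomial.aeval θ ((Polynomial.X : Polynomial ℝ) * p) := by rw [map_mul, ← h1]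
        _ = Polynomial.aeval θ (p * (Polynomial.X : Polynomial ℝ)) := by rw [mul_comm]
        _ = Polynomial.aeval θ p * θ := by rw [map_mul, ← h1]
    exact congrFun (congrArg DFunLike.coe hcomm) Z
  -- θ - id is surjective on m
  have hθsurj : ∀ Y : m, ∃ Z : m, θ Z - Z = Y := by
    intro Y
    have hYr : (Y : g) ∈ LinearMap.range A := by rw [← hm]; exact Y.2
    obtain ⟨x, hx⟩ := hYr
    refine ⟨P x, ?_⟩
    have hker : A (x - (P x : g)) = 0 := by
      rw [hAapp, hφfix _ (hdecmem x), sub_self]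
    have hAx : A (P x : g) = A x := by
      have h2 := map_sub A x (P x : g)
      rw [hker] at h2
      have := sub_eq_zero.1 h2.symm
      exact this.symm
    apply Subtype.ext
    have hcoe : ((θ (P x) - P x : m) : g) = A (P x : g) := by
      rw [hAapp]
      push_cast
      rw [hθ]
    rw [hcoe, hAx, hx]
  -- nondegeneracy of B
  have hBnd : ∀ W : m, (∀ Z : m, B W Z = 0) → W = 0 := by
    intro W hW
    by_contra hW0
    have := hBpos W hW0
    rw [hW W] at this
    exact lt_irrefl 0 this
  -- the trilinear form invariance
  have hTinv : ∀ U V W : m, B (P ⁅((θ U) : g), ((θ V) : g)⁆) (θ W) =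
      B (P ⁅(U : g), (V : g)⁆) W := by
    intro U V W
    have hbr : (⁅((θ U) : g), ((θ V) : g)⁆ : g) = φ ⁅(U : g), (V : g)⁆ := by
      rw [hθ, hθ]
      exact (LieEquiv.map_lie φ (U : g) (V : g)).symm
    rw [hbr, hPφ, hBθ]
  -- set Y := f X, Y2 := f (f X)
  set Y : m := f X with hY
  set Y2 : m := f (f X) with hY2
  have hf3' : f Y2 = -Y := by
    have := hf3 X
    rw [hY2, hY]
    linear_combination (norm := module) this
  have hkey : ∀ Z : m, B (P ⁅(Y : g), (Y2 : g)⁆) (θ Z) = B (P ⁅(Y : g), (Y2 : g)⁆) Z := by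
    intro Z
    rcases hfsq with hs | hs
    · have h1 : θ Y = Y2 := by rw [hY, hY2, hs]
      have h2 : θ Y2 = -Y := by
        have : θ (f X) = f (f X) := (hs X).symm
        rw [hY2, hθf, this, ← hY2, hf3']
      have h3 := hTinv Y Y2 Z
      rw [h1, h2] at h3
      rw [← h3]
      congr 2
      push_cast
      rw [← lie_skew]
      simp
    · have hθfX : θ (f X) = -(f (f X)) := by
        have := hs X
        linear_combination (norm := module) this
      have h1 : θ Y = -Y2 := by rw [hY, hY2, hθfX]
      have h2 : θ Y2 = Y := by
        rw [hY2, hθf, hθfX, map_neg, ← hY2, hf3', neg_neg]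
      have h3 := hTinv Y Y2 Z
      rw [h1, h2] at h3
      rw [← h3]
      congr 2
      push_cast
      rw [← lie_skew]
      simp
  -- hence the form vanishes
  have hzero : ∀ Z : m, B (P ⁅(Y : g), (Y2 : g)⁆) Z = 0 := by
    intro Z
    obtain ⟨W, hW⟩ := hθsurj Z
    have hk := hkey W
    calc B (P ⁅(Y : g), (Y2 : g)⁆) Z = B (P ⁅(Y : g), (Y2 : g)⁆) (θ W - W) := by rw [hW]
      _ = B (P ⁅(Y : g), (Y2 : g)⁆) (θ W) - B (P ⁅(Y : g), (Y2 : g)⁆) W := by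
          rw [map_sub]
      _ = 0 := by rw [hk, sub_self]
  have hPzero : P ⁅(Y : g), (Y2 : g)⁆ = 0 := hBnd _ hzero
  -- finish
  rw [hnabla]
  have hfYY2 : f Y = Y2 := rfl
  have hself : P ⁅(Y : g), (Y : g)⁆ = 0 := by
    rw [lie_self, map_zero]
  rw [hfYY2, hPzero, hself, map_zero, sub_zero, smul_zero]
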